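/- Let a b : α with a ≠ b, and define word relations R, S : List α → Set (List α) by R w = {([a, b])^{|w|}, ([b, a])^{|w|}} and S w = {([a, b])^{|w|}}, where |w| = w.length and u^k denotes k-fold concatenation. Then, with respect to the Levenshtein metric, D(R, S) = 2. -/

import Mathlib

/-- `wpow u k` is the k-fold concatenation `u ++ u ++ ⋯ ++ u` (k copies). -/
def wpow {α : Type*} (u : List α) (k : ℕ) : List α := (List.replicate k u).flatten

/-- Levenshtein edit distance, removed from Mathlib (was `Mathlib.Data.List.EditDistance.Defs`);
reproduced here with its old definition. -/
structure Levenshtein.Cost (α β δ : Type*) where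
  /-- Cost to delete an element from a list. -/
  delete : α → δ
  /-- Cost in insert an element into a list. -/
  insert : β → δ
  /-- Cost to substitute one element for another in a list. -/
  substitute : α → β → δ

/-- The default cost structure: each insertion, deletion and substitution costs 1. -/
def Levenshtein.defaultCost {α : Type*} [DecidableEq α] : Levenshtein.Cost α α ℕ where
  delete _ := 1
  insert _ := 1
  substitute a b := if a = b then 0 else 1

/-- Inner loop of the Levenshtein algorithm. -/
def Levenshtein.impl {α β δ : Type*} [AddZeroClass δ] [Min δ]
    (C : Levenshtein.Cost α β δ) (xs : List α) (y : β)
    (d : {r : List δ // 0 < r.length}) : {r : List δ // 0 < r.length} :=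
  let ⟨ds, w⟩ := d
  xs.zip (ds.zip ds.tail) |>.foldr
    (init := ⟨[C.insert y + ds.getLast (List.ne_nil_of_length_pos w)], by simp⟩)
    (fun ⟨x, d₀, d₁⟩ ⟨r, w⟩ =>
      ⟨min (C.delete x + r[0]) (min (C.insert y + d₀) (C.substitute x y + d₁)) :: r, by simp⟩)

/-- Levenshtein distances from every suffix of `xs` to `ys`. -/
def suffixLevenshtein {α β δ : Type*} [AddZeroClass δ] [Min δ]
    (C : Levenshtein.Cost α β δ) (xs : List α) (ys : List β) :
    {r : List δ // 0 < r.length} :=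
  ys.foldr
    (Levenshtein.impl C xs)
    (xs.foldr (init := ⟨[0], by simp⟩) (fun a ⟨r, w⟩ => ⟨(C.delete a + r[0]) :: r, by simp⟩))

/-- The Levenshtein edit distance with cost structure `C`. -/
def levenshtein {α β δ : Type*} [AddZeroClass δ] [Min δ]
    (C : Levenshtein.Cost α β δ) (xs : List α) (ys : List β) : δ :=
  let ⟨r, w⟩ := suffixLevenshtein C xs ys
  r[0]

open scoped Classical

/-- The domain of a word relation. -/
def dom {A B : Type*} (R : List A → Set (List B)) : Set (List A) := {u | (R u).Nonempty}

/-- Directed distance between two sets of words. -/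
noncomputable def dirDist {B : Type*} (d : List B → List B → ℕ∞) (L L' : Set (List B)) : ℕ∞ :=
  ⨆ v ∈ L, ⨅ v' ∈ L', d v v'

/-- Hausdorff distance between two sets of words. -/
noncomputable def hausDist {B : Type*} (d : List B → List B → ℕ∞) (L L' : Set (List B)) : ℕ∞ :=
  max (dirDist d L L') (dirDist d L' L)

/-- Distance between two word relations. -/
noncomputable def relDist {A B : Type*} (d : List B → List B → ℕ∞)
    (R S : List A → Set (List B)) : ℕ∞ :=
  if dom R = dom S then ⨆ u ∈ dom R, hausDist d (R u) (S u) else ⊤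

section LevAPI
variable {α β δ : Type*} [AddZeroClass δ] [Min δ] {C : Levenshtein.Cost α β δ}

theorem Levenshtein.impl_cons {x : α} {xs : List α} {y : β} {d : δ} {ds : List δ} {w}
    (w' : 0 < List.length ds) :
    Levenshtein.impl C (x :: xs) y ⟨d :: ds, w⟩ =
      let ⟨r, w⟩ := Levenshtein.impl C xs y ⟨ds, w'⟩
      ⟨min (C.delete x + r[0]) (min (C.insert y + d) (C.substitute x y + ds[0])) :: r, by simp⟩ :=
  match ds, w' with | _ :: _, _ => rfl

theorem Levenshtein.impl_cons_fst_zero {x : α} {xs : List α} {y : β} {d : δ} {ds : List δ} {w}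
    (h) (w' : 0 < List.length ds) :
    (Levenshtein.impl C (x :: xs) y ⟨d :: ds, w⟩).1[0]'h =
      let ⟨r, w⟩ := Levenshtein.impl C xs y ⟨ds, w'⟩
      min (C.delete x + r[0]) (min (C.insert y + d) (C.substitute x y + ds[0])) :=
  match ds, w' with | _ :: _, _ => rfl

theorem Levenshtein.impl_length {xs : List α} {y : β} (d : {r : List δ // 0 < r.length})
    (w : d.1.length = xs.length + 1) :
    (Levenshtein.impl C xs y d).1.length = xs.length + 1 := by
  induction xs generalizing d with
  | nil => rfl
  | cons x xs ih =>
    dsimp [Levenshtein.impl]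
    match d, w with
    | ⟨d₁ :: d₂ :: ds, _⟩, w =>
      dsimp
      congr 1
      exact ih ⟨d₂ :: ds, (by simp)⟩ (by simpa using w)

theorem suffixLevenshtein_length (xs : List α) (ys : List β) :
    (suffixLevenshtein C xs ys).1.length = xs.length + 1 := by
  induction ys with
  | nil =>
    dsimp [suffixLevenshtein]
    induction xs with
    | nil => rfl
    | cons _ xs ih => simp_all
  | cons y ys ih =>
    dsimp [suffixLevenshtein]
    rw [Levenshtein.impl_length]
    exact ih

theorem suffixLevenshtein_cons₂ (xs : List α) (y ys) :
    suffixLevenshtein C xs (y :: ys) = (Levenshtein.impl C xs y) (suffixLevenshtein C xs ys) :=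
  rfl

theorem suffixLevenshtein_cons₁_aux {α} {x y : {r : List α // 0 < r.length}}
    (w₀ : x.1[0]'x.2 = y.1[0]'y.2) (w : x.1.tail = y.1.tail) : x = y := by
  match x, y with
  | ⟨hx :: tx, _⟩, ⟨hy :: ty, _⟩ => simp_all

theorem suffixLevenshtein_cons₁ (x : α) (xs ys) :
    suffixLevenshtein C (x :: xs) ys =
      ⟨levenshtein C (x :: xs) ys :: (suffixLevenshtein C xs ys).1, by simp⟩ := by
  induction ys with
  | nil => rfl
  | cons y ys ih =>
    apply suffixLevenshtein_cons₁_aux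
    · rfl
    · rw [suffixLevenshtein_cons₂ (x :: xs), ih, Levenshtein.impl_cons]
      · rfl
      · simp [suffixLevenshtein_length]

theorem suffixLevenshtein_cons_cons_fst_get_zero (x : α) (xs y ys) (w) :
    (suffixLevenshtein C (x :: xs) (y :: ys)).1[0]'w =
      let ⟨dx, _⟩ := suffixLevenshtein C xs (y :: ys)
      let ⟨dy, _⟩ := suffixLevenshtein C (x :: xs) ys
      let ⟨dxy, _⟩ := suffixLevenshtein C xs ys
      min (C.delete x + dx[0]) (min (C.insert y + dy[0]) (C.substitute x y + dxy[0])) := by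
  conv =>
    lhs
    dsimp only [suffixLevenshtein_cons₂]
  simp only [suffixLevenshtein_cons₁]
  rw [Levenshtein.impl_cons_fst_zero]
  rfl

@[simp]
theorem levenshtein_nil_nil : levenshtein C [] [] = 0 := by
  simp [levenshtein, suffixLevenshtein]

@[simp]
theorem levenshtein_nil_cons (y) (ys) :
    levenshtein C [] (y :: ys) = C.insert y + levenshtein C [] ys := by
  have h := suffixLevenshtein_length (C := C) [] ys
  show (Levenshtein.impl C [] y (suffixLevenshtein C [] ys)).1[0]'(Levenshtein.impl C [] y _).2 =
    C.insert y + (suffixLevenshtein C [] ys).1[0]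
  have key : ∀ s : {r : List δ // 0 < r.length}, s.1.length = 1 →
      (Levenshtein.impl C [] y s).1[0]'(Levenshtein.impl C [] y s).2 = C.insert y + s.1[0]'s.2 := by
    rintro ⟨r, w⟩ h
    cases r with
    | nil => simp at h
    | cons z t =>
      cases t with
      | nil => rfl
      | cons _ _ => simp at h
  exact key _ (by simpa using h)

@[simp]
theorem levenshtein_cons_nil (x : α) (xs : List α) :
    levenshtein C (x :: xs) [] = C.delete x + levenshtein C xs [] :=
  rfl

@[simp]
theorem levenshtein_cons_cons (x : α) (xs : List α) (y : β) (ys : List β) :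
    levenshtein C (x :: xs) (y :: ys) =
      min (C.delete x + levenshtein C xs (y :: ys))
        (min (C.insert y + levenshtein C (x :: xs) ys)
          (C.substitute x y + levenshtein C xs ys)) :=
  suffixLevenshtein_cons_cons_fst_get_zero ..

end LevAPI

@[simp]
theorem Levenshtein.defaultCost_delete {α : Type*} [DecidableEq α] (a : α) :
    Levenshtein.defaultCost.delete a = 1 := rfl

@[simp]
theorem Levenshtein.defaultCost_insert {α : Type*} [DecidableEq α] (a : α) :
    Levenshtein.defaultCost.insert a = 1 := rfl

@[simp]
theorem Levenshtein.defaultCost_substitute {α : Type*} [DecidableEq α] (a b : α) :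
    Levenshtein.defaultCost.substitute a b = if a = b then 0 else 1 := rfl

lemma lev_self {α : Type*} [DecidableEq α] (s : List α) :
    levenshtein Levenshtein.defaultCost s s = 0 := by
  induction s with
  | nil => simp
  | cons c t ih => simp [ih]

lemma lev_append_single {α : Type*} [DecidableEq α] (b : α) (s : List α) :
    levenshtein Levenshtein.defaultCost s (s ++ [b]) ≤ 1 := by
  induction s with
  | nil => simp
  | cons c t ih =>
    calc levenshtein Levenshtein.defaultCost (c :: t) ((c :: t) ++ [b])
        ≤ Levenshtein.defaultCost.substitute c c
            + levenshtein Levenshtein.defaultCost t (t ++ [b]) := by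
          simp only [List.cons_append, levenshtein_cons_cons]
          exact le_trans (min_le_right _ _) (min_le_right _ _)
      _ ≤ 1 := by simpa using ih

lemma lev_rot {α : Type*} [DecidableEq α] (b : α) (s : List α) :
    levenshtein Levenshtein.defaultCost (b :: s) (s ++ [b]) ≤ 2 := by
  cases s with
  | nil => simp [lev_self]
  | cons c t =>
    calc levenshtein Levenshtein.defaultCost (b :: c :: t) ((c :: t) ++ [b])
        ≤ Levenshtein.defaultCost.delete b
            + levenshtein Levenshtein.defaultCost (c :: t) ((c :: t) ++ [b]) := by
          simp only [List.cons_append, levenshtein_cons_cons]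
          exact min_le_left _ _
      _ ≤ 1 + 1 := by
          exact add_le_add (le_refl 1) (lev_append_single b (c :: t))
      _ = 2 := rfl

lemma wpow_succ {α : Type*} (u : List α) (n : ℕ) :
    wpow u (n + 1) = u ++ wpow u n := by
  simp [wpow, List.replicate_succ]

lemma wpow_succ' {α : Type*} (u : List α) (n : ℕ) :
    wpow u (n + 1) = wpow u n ++ u := by
  simp [wpow, List.replicate_succ']

lemma wpow_ab_succ {α : Type*} (a b : α) (n : ℕ) :
    wpow [a, b] (n + 1) = (wpow [a, b] n ++ [a]) ++ [b] := by
  rw [wpow_succ']; simp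

lemma wpow_ba_succ {α : Type*} (a b : α) (n : ℕ) :
    wpow [b, a] (n + 1) = b :: (wpow [a, b] n ++ [a]) := by
  induction n with
  | zero => simp [wpow]
  | succ m ih => rw [wpow_succ _ (m+1), ih, wpow_succ]; simp

set_option maxHeartbeats 1000000 in
theorem stmt_13 {α : Type*} [DecidableEq α] (a b : α) (hab : a ≠ b)
    (R S : List α → Set (List α))
    (hR : ∀ w, R w = {wpow [a, b] w.length, wpow [b, a] w.length})
    (hS : ∀ w, S w = {wpow [a, b] w.length}) :
    relDist (fun v v' => ((levenshtein Levenshtein.defaultCost v v' : ℕ) : ℕ∞)) R S = 2 := by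
  set d : List α → List α → ℕ∞ :=
    fun v v' => ((levenshtein Levenshtein.defaultCost v v' : ℕ) : ℕ∞) with hd
  clear_value d
  have hdself : ∀ v, d v v = 0 := fun v => by simp [hd, lev_self]
  have hdomR : dom R = Set.univ := by
    ext w; simp [dom, hR]
  have hdomS : dom S = Set.univ := by
    ext w; simp [dom, hS]
  have hH : ∀ u : List α,
      hausDist d (R u) (S u) = d (wpow [b, a] u.length) (wpow [a, b] u.length) := by
    intro u
    rw [hausDist, dirDist, dirDist, hR, hS]
    rw [iSup_insert, iSup_singleton, iSup_singleton, iInf_singleton, iInf_singleton,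
      iInf_insert, iInf_singleton]
    simp [hdself]
  rw [relDist, if_pos (hdomR.trans hdomS.symm), hdomR]
  simp only [Set.mem_univ, iSup_pos, hH]
  apply le_antisymm
  · apply iSup_le
    intro u
    cases hn : u.length with
    | zero => simp [hd, wpow, lev_self]
    | succ m =>
      rw [wpow_ba_succ, wpow_ab_succ]
      have h2 := lev_rot b (wpow [a, b] m ++ [a])
      calc d (b :: (wpow [a, b] m ++ [a])) ((wpow [a, b] m ++ [a]) ++ [b])
          ≤ ((2 : ℕ) : ℕ∞) := by simp only [hd]; exact_mod_cast Nat.cast_le.mpr h2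
        _ = 2 := by norm_num
  · have key : d (wpow [b, a] ([a] : List α).length) (wpow [a, b] ([a] : List α).length) = 2 := by
      have : wpow [b, a] 1 = [b, a] := by simp [wpow]
      have h2 : wpow [a, b] 1 = [a, b] := by simp [wpow]
      simp only [List.length_singleton, this, h2, hd]
      have : levenshtein Levenshtein.defaultCost [b, a] [a, b] = 2 := by
        simp [hab, hab.symm, lev_self]
      rw [this]; norm_num
    calc (2 : ℕ∞) = d (wpow [b, a] ([a] : List α).length) (wpow [a, b] ([a] : List α).length) :=
          key.symm
      _ ≤ _ := le_iSup (fun u => d (wpow [b, a] u.length) (wpow [a, b] u.length)) [a]
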